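/- arXiv:1905.03034 — 3 statements merged into one kernel-verified Lean document; each statement's English description precedes it below -/
import Mathlib

section
/- Let {X_n} and {Y_n} be two asymptotically equivalent sequences of n×n complex matrices, and let P be any fixed polynomial whose degree is independent of n. Then the sequences {P(X_n)} and {P(Y_n)} are asymptotically equivalent; in particular, ‖P(X_n) − P(Y_n)‖_1 = o(n) as n → ∞ and both {P(X_n)} and {P(Y_n)} are uniformly bounded in spectral norm by a constant independent of n. -/
open MeasureTheory Filter Matrix Polynomial Asymptotics
open scoped Classical

noncomputable section

/-- The domain `(-π, π]`. -/
def Tset : Set ℝ := Set.Ioc (-Real.pi) Real.pi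

/-- Lebesgue measure restricted to `(-π, π]`. -/
def muT : Measure ℝ := volume.restrict Tset

/-- The `k`-th Fourier coefficient of `f` on `(-π, π]`. -/
def fhat (f : ℝ → ℂ) (k : ℤ) : ℂ :=
  (1 / (2 * (Real.pi : ℂ))) *
    ∫ t in Tset, f t * Complex.exp (-Complex.I * (k : ℂ) * (t : ℂ))

/-- The `n × n` `g`-Toeplitz matrix of symbol `f`. -/
def gToeplitz (n g : ℕ) (f : ℝ → ℂ) : Matrix (Fin n) (Fin n) ℂ :=
  Matrix.of fun r s => fhat f ((r : ℤ) - (g : ℤ) * (s : ℤ))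

/-- `f ∈ L^∞(-π, π]`. -/
def MemLinf (f : ℝ → ℂ) : Prop := MeasureTheory.MemLp f ⊤ muT

/-- The `L^∞` norm of `f` on `(-π, π]`. -/
def linfNorm (f : ℝ → ℂ) : ℝ := (eLpNorm f ⊤ muT).toReal

/-- The singular values of a complex square matrix. -/
def singVals {N : ℕ} (X : Matrix (Fin N) (Fin N) ℂ) : Fin N → ℝ :=
  fun i => Real.sqrt ((Matrix.isHermitian_conjTranspose_mul_self X).eigenvalues i)

/-- The trace norm (Schatten 1-norm): sum of the singular values. -/
def traceNorm {N : ℕ} (X : Matrix (Fin N) (Fin N) ℂ) : ℝ :=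
  ∑ i, singVals X i

/-- The Schatten `q`-norm. -/
def schattenNorm {N : ℕ} (q : ℝ) (X : Matrix (Fin N) (Fin N) ℂ) : ℝ :=
  (∑ i, singVals X i ^ q) ^ (1 / q)

/-- The spectral norm: operator norm induced by the Euclidean norm. -/
def specNorm {N : ℕ} (X : Matrix (Fin N) (Fin N) ℂ) : ℝ :=
  ‖Matrix.toEuclideanCLM (𝕜 := ℂ) X‖

/-- The eigenvalues of a complex matrix, with multiplicity. -/
def eigs {N : ℕ} (A : Matrix (Fin N) (Fin N) ℂ) : Multiset ℂ := A.charpoly.roots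

/-- The number of eigenvalues of `A` lying outside the `ε`-neighborhood of `S`. -/
def outCount {N : ℕ} (A : Matrix (Fin N) (Fin N) ℂ) (S : Set ℂ) (ε : ℝ) : ℕ :=
  Multiset.card (Multiset.filter (fun z => ∀ w ∈ S, ε ≤ dist z w) (eigs A))

/-- Weak clustering (in the sense of eigenvalues) of a matrix sequence at a set `S`. -/
def weakCluster (d : ℕ → ℕ) (A : ∀ n, Matrix (Fin (d n)) (Fin (d n)) ℂ) (S : Set ℂ) : Prop :=
  ∀ ε : ℝ, 0 < ε →
    Tendsto (fun n => (outCount (A n) S ε : ℝ) / (d n : ℝ)) atTop (nhds 0)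

/-- Distribution in the sense of eigenvalues as the pair `(θ, G)`. -/
def distEig (d : ℕ → ℕ) (A : ∀ n, Matrix (Fin (d n)) (Fin (d n)) ℂ)
    (θ : ℝ → ℂ) (G : Set ℝ) : Prop :=
  ∀ F : ℂ → ℂ, Continuous F → HasCompactSupport F →
    Tendsto (fun n => ((eigs (A n)).map F).sum / (d n : ℂ)) atTop
      (nhds ((∫ t in G, F (θ t)) / (((volume G).toReal : ℝ) : ℂ)))

/-- The essential range of `h` viewed as a function on `G`. -/
def essRange (h : ℝ → ℂ) (G : Set ℝ) : Set ℂ :=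
  {z : ℂ | ∀ ε : ℝ, 0 < ε → 0 < volume {t ∈ G | dist (h t) z < ε}}

/-- `Area(W)`: the complement of the unbounded connected component of `ℂ \ W`. -/
def area (W : Set ℂ) : Set ℂ :=
  {z : ℂ | z ∈ W ∨ Bornology.IsBounded (connectedComponentIn Wᶜ z)}

/-- `θ_g`: `1` if `g = 1` and `0` otherwise. -/
def thetag (g : ℕ) : ℂ := if g = 1 then 1 else 0

/-- The Cesàro (Fejér) mean of order `m` of `f`. -/
def cesaro (f : ℝ → ℂ) (m : ℕ) : ℝ → ℂ := fun t =>
  (1 / ((m : ℂ) + 1)) * ∑ r ∈ Finset.range (m + 1),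
    ∑ k ∈ Finset.Icc (-(r : ℤ)) (r : ℤ), fhat f k * Complex.exp (Complex.I * (k : ℂ) * (t : ℂ))

/-- The operator `u ↦ P_n^⊥ (P · (u ∘ h_g))`, written out through Fourier coefficients. -/
def TngOp (n g : ℕ) (P : ℝ → ℂ) (u : ℝ → ℂ) : ℝ → ℂ := fun t =>
  ∑ j ∈ Finset.range n,
    fhat (fun s => P s * u ((g : ℝ) * s)) (j : ℤ) * Complex.exp (Complex.I * (j : ℂ) * (t : ℂ))

/-- The annihilation hypothesis: for every `m` and `n`, the operator
`T_{n,g}^{P_{m,f₁} P_{m,f₂}}` annihilates `e^{iglt} - e^{ilt}` for every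
`l ∈ {[m/g], …, [(n-1-m)/g]}`. -/
def AnnihilHyp (g : ℕ) (f₁ f₂ : ℝ → ℂ) : Prop :=
  ∀ m n l : ℕ, m / g ≤ l → l ≤ (n - 1 - m) / g →
    TngOp n g (fun t => cesaro f₁ m t * cesaro f₂ m t)
      (fun t => Complex.exp (Complex.I * ((g * l : ℕ) : ℂ) * (t : ℂ)) -
        Complex.exp (Complex.I * ((l : ℕ) : ℂ) * (t : ℂ))) = 0

/-- `⌈n/g⌉` as a natural number. -/
def mug (n g : ℕ) : ℕ := (n + g - 1) / g


/-- `[0 | 𝒯_{n,g}]`: the last `n - ⌈n/g⌉` columns of `T_{n,g}(f)` padded by zero columns. -/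
def padT (n g : ℕ) (f : ℝ → ℂ) : Matrix (Fin n) (Fin n) ℂ :=
  Matrix.of fun r s => if (s : ℕ) < mug n g then 0 else gToeplitz n g f r s

/-- `[Ẑ_{n,g} | 0]`: the first `⌈n/g⌉` columns of `Z_{n,g}` padded by zero columns. -/
def ZhatPad (n g : ℕ) : Matrix (Fin n) (Fin n) ℂ :=
  Matrix.of fun r s =>
    if (s : ℕ) < mug n g ∧ ((r : ℤ) - (g : ℤ) * (s : ℤ)) % (n : ℤ) = 0 then 1 else 0

/-- Asymptotic equivalence of two matrix sequences. -/
def AsympEquiv (A B : ∀ n : ℕ, Matrix (Fin n) (Fin n) ℂ) : Prop :=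
  (∃ C : ℝ, ∀ n, specNorm (A n) ≤ C ∧ specNorm (B n) ≤ C) ∧
  (fun n => traceNorm (A n - B n)) =o[atTop] (fun n => (n : ℝ))

end
open scoped Matrix.Norms.L2Operator

section TraceNormFacts

variable {N : ℕ}

lemma specNorm_eq_norm (M : Matrix (Fin N) (Fin N) ℂ) : specNorm M = ‖M‖ := rfl

lemma traceNorm_nonneg' (M : Matrix (Fin N) (Fin N) ℂ) : 0 ≤ traceNorm M :=
  Finset.sum_nonneg fun _ _ => Real.sqrt_nonneg _

lemma matrix_norm_one_le' : ‖(1 : Matrix (Fin N) (Fin N) ℂ)‖ ≤ 1 := by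
  rw [Matrix.cstar_norm_def, _root_.map_one]; exact ContinuousLinearMap.norm_id_le

lemma norm_trace_mul_le (X U : Matrix (Fin N) (Fin N) ℂ) :
    ‖Matrix.trace (X * U)‖ ≤ traceNorm X * ‖U‖ := by
  classical
  set hH := Matrix.isHermitian_conjTranspose_mul_self X with hHdef
  set V : Matrix (Fin N) (Fin N) ℂ := (hH.eigenvectorUnitary : Matrix (Fin N) (Fin N) ℂ) with hVdef
  have hV1 : Vᴴ * V = 1 := by
    simpa [Matrix.star_eq_conjTranspose] using Unitary.coe_star_mul_self hH.eigenvectorUnitary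
  have hV2 : V * Vᴴ = 1 := by
    simpa [Matrix.star_eq_conjTranspose] using Unitary.coe_mul_star_self hH.eigenvectorUnitary
  have hspec : Vᴴ * (Xᴴ * X) * V = Matrix.diagonal (Complex.ofReal ∘ hH.eigenvalues) := by
    have h0 := Matrix.IsHermitian.conjStarAlgAut_star_eigenvectorUnitary hH
    rw [Unitary.conjStarAlgAut_star_apply] at h0
    simpa [Matrix.star_eq_conjTranspose] using h0
  have htr : Matrix.trace ((Vᴴ * U) * (X * V)) = Matrix.trace (X * U) := by
    conv_lhs => rw [show (Vᴴ * U) * (X * V) = Vᴴ * ((U * X) * V) by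
      simp only [mul_assoc], Matrix.trace_mul_comm, mul_assoc, hV2, mul_one]
    rw [Matrix.trace_mul_comm]
  have hcolsq : ∀ i : Fin N, ∑ k, ‖V k i‖ ^ 2 = 1 := by
    intro i
    have h1 : (Vᴴ * V) i i = 1 := by rw [hV1]; simp [Matrix.one_apply]
    have h2 : (Vᴴ * V) i i = ((∑ k, ‖V k i‖ ^ 2 : ℝ) : ℂ) := by
      rw [Matrix.mul_apply]
      push_cast
      exact Finset.sum_congr rfl fun k _ => by
        rw [Matrix.conjTranspose_apply, RCLike.star_def, Complex.conj_mul']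
    have := h1 ▸ h2
    exact_mod_cast this.symm
  have hXcolsq : ∀ i : Fin N, ∑ k, ‖(X * V) k i‖ ^ 2 = hH.eigenvalues i := by
    intro i
    have h1 : ((X * V)ᴴ * (X * V)) i i = ((hH.eigenvalues i : ℝ) : ℂ) := by
      have : (X * V)ᴴ * (X * V) = Vᴴ * (Xᴴ * X) * V := by
        simp only [Matrix.conjTranspose_mul, mul_assoc]
      rw [this, hspec]
      simp [Matrix.diagonal_apply_eq]
    have h2 : ((X * V)ᴴ * (X * V)) i i = ((∑ k, ‖(X * V) k i‖ ^ 2 : ℝ) : ℂ) := by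
      rw [Matrix.mul_apply]
      push_cast
      exact Finset.sum_congr rfl fun k _ => by
        rw [Matrix.conjTranspose_apply, RCLike.star_def, Complex.conj_mul']
    have := h1 ▸ h2
    exact_mod_cast this.symm
  have key : ∀ i : Fin N, ‖((Vᴴ * U) * (X * V)) i i‖ ≤ ‖U‖ * singVals X i := by
    intro i
    set col : EuclideanSpace ℂ (Fin N) := (WithLp.equiv 2 _).symm (fun k => V k i) with hcol
    set x : EuclideanSpace ℂ (Fin N) := (WithLp.equiv 2 _).symm (Uᴴ *ᵥ (fun k => V k i)) with hx
    set y : EuclideanSpace ℂ (Fin N) := (WithLp.equiv 2 _).symm (X *ᵥ (fun k => V k i)) with hy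
    have hentry : ((Vᴴ * U) * (X * V)) i i = inner (𝕜 := ℂ) x y := by
      rw [PiLp.inner_apply]
      simp only [RCLike.inner_apply, Matrix.mul_apply, WithLp.equiv_symm_apply, PiLp.toLp_apply, hx, hy,
        Matrix.mulVec, dotProduct, Matrix.conjTranspose_apply, _root_.map_sum,
        _root_.map_mul, RingHom.coe_coe, starRingEnd_apply, star_star, Finset.sum_mul,
        Finset.mul_sum]
      exact Finset.sum_congr rfl fun _ _ => by
        rw [Finset.sum_comm]
        exact Finset.sum_congr rfl fun _ _ => Finset.sum_congr rfl fun _ _ => by ring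
    have hcolnorm : ‖col‖ = 1 := by
      rw [EuclideanSpace.norm_eq]
      simp only [hcol, WithLp.equiv_symm_apply, PiLp.toLp_apply]
      rw [hcolsq i, Real.sqrt_one]
    have hynorm : ‖y‖ = singVals X i := by
      rw [EuclideanSpace.norm_eq]
      simp only [hy, WithLp.equiv_symm_apply, PiLp.toLp_apply]
      have : ∀ k, ‖(X *ᵥ fun k => V k i) k‖ = ‖(X * V) k i‖ := fun k => by
        simp [Matrix.mulVec, dotProduct, Matrix.mul_apply]
      simp_rw [this]
      rw [hXcolsq i]
      rfl
    have hxnorm : ‖x‖ ≤ ‖U‖ * 1 := by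
      have h := Matrix.l2_opNorm_mulVec Uᴴ col
      rw [Matrix.l2_opNorm_conjTranspose, hcolnorm] at h
      exact h
    calc ‖((Vᴴ * U) * (X * V)) i i‖ = ‖inner (𝕜 := ℂ) x y‖ := by rw [hentry]
    _ ≤ ‖x‖ * ‖y‖ := norm_inner_le_norm x y
    _ ≤ (‖U‖ * 1) * singVals X i := by
        rw [hynorm]
        exact mul_le_mul_of_nonneg_right hxnorm (Real.sqrt_nonneg _)
    _ = ‖U‖ * singVals X i := by ring
  calc ‖Matrix.trace (X * U)‖ = ‖∑ i, ((Vᴴ * U) * (X * V)) i i‖ := by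
        rw [← htr]; rfl
  _ ≤ ∑ i, ‖((Vᴴ * U) * (X * V)) i i‖ := norm_sum_le _ _
  _ ≤ ∑ i, ‖U‖ * singVals X i := Finset.sum_le_sum fun i _ => key i
  _ = traceNorm X * ‖U‖ := by
      rw [traceNorm, Finset.sum_mul, ← Finset.mul_sum]; ring_nf; rw [Finset.mul_sum]

lemma exists_dual_matrix (X : Matrix (Fin N) (Fin N) ℂ) :
    ∃ U : Matrix (Fin N) (Fin N) ℂ, ‖U‖ ≤ 1 ∧
      Matrix.trace (X * U) = ((traceNorm X : ℝ) : ℂ) := by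
  classical
  set hH := Matrix.isHermitian_conjTranspose_mul_self X with hHdef
  set V : Matrix (Fin N) (Fin N) ℂ := (hH.eigenvectorUnitary : Matrix (Fin N) (Fin N) ℂ) with hVdef
  have hV1 : Vᴴ * V = 1 := by
    simpa [Matrix.star_eq_conjTranspose] using Unitary.coe_star_mul_self hH.eigenvectorUnitary
  have hV2 : V * Vᴴ = 1 := by
    simpa [Matrix.star_eq_conjTranspose] using Unitary.coe_mul_star_self hH.eigenvectorUnitary
  have hspec : Vᴴ * (Xᴴ * X) * V = Matrix.diagonal (Complex.ofReal ∘ hH.eigenvalues) := by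
    have h0 := Matrix.IsHermitian.conjStarAlgAut_star_eigenvectorUnitary hH
    rw [Unitary.conjStarAlgAut_star_apply] at h0
    simpa [Matrix.star_eq_conjTranspose] using h0
  have hev : ∀ i, 0 ≤ hH.eigenvalues i := fun i =>
    Matrix.eigenvalues_conjTranspose_mul_self_nonneg X i
  set s : Fin N → ℂ := fun i => if hH.eigenvalues i = 0 then 0
    else (((Real.sqrt (hH.eigenvalues i) : ℝ) : ℂ))⁻¹ with hs
  refine ⟨V * Matrix.diagonal s * Vᴴ * Xᴴ, ?_, ?_⟩
  · set W : Matrix (Fin N) (Fin N) ℂ := X * V * Matrix.diagonal s with hW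
    have hUW : V * Matrix.diagonal s * Vᴴ * Xᴴ = V * Wᴴ := by
      rw [hW]
      simp only [Matrix.conjTranspose_mul, Matrix.diagonal_conjTranspose]
      have : star s = s := by
        funext i
        rw [hs]
        by_cases h : hH.eigenvalues i = 0 <;>
          simp [h, Pi.star_apply, RCLike.star_def, ← Complex.ofReal_inv]
      rw [this]
      simp only [mul_assoc]
    have hWHW : Wᴴ * W = Matrix.diagonal (fun i => star (s i) * ((hH.eigenvalues i : ℂ) * s i)) := by
      have e1 : Wᴴ * W = Matrix.diagonal (star s) * (Vᴴ * (Xᴴ * X) * V) * Matrix.diagonal s := by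
        rw [hW]
        simp only [Matrix.conjTranspose_mul, Matrix.diagonal_conjTranspose, mul_assoc]
      rw [e1, hspec, Matrix.diagonal_mul_diagonal, Matrix.diagonal_mul_diagonal]
      refine congrArg Matrix.diagonal ?_
      funext i
      simp [mul_assoc]
    have hent : ∀ i, star (s i) * ((hH.eigenvalues i : ℂ) * s i)
        = if hH.eigenvalues i = 0 then 0 else 1 := by
      intro i
      by_cases h : hH.eigenvalues i = 0
      · simp [hs, h]
      · have hsq : Real.sqrt (hH.eigenvalues i) ≠ 0 := by
          rw [Real.sqrt_ne_zero']
          exact lt_of_le_of_ne (hev i) (Ne.symm h)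
        have hlam : (hH.eigenvalues i : ℂ) = ((Real.sqrt (hH.eigenvalues i) : ℂ)) ^ 2 := by
          rw [← Complex.ofReal_pow, Real.sq_sqrt (hev i)]
        simp only [hs, h, if_false]
        rw [RCLike.star_def, ← Complex.ofReal_inv, Complex.conj_ofReal, hlam]
        have : ((Real.sqrt (hH.eigenvalues i) : ℝ) : ℂ) ≠ 0 := by
          exact_mod_cast hsq
        field_simp
        rw [one_div, Complex.ofReal_inv, inv_pow, inv_mul_cancel₀ (pow_ne_zero 2 this)]
    have hproj : ‖Wᴴ * W‖ ≤ 1 := by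
      set P := Wᴴ * W with hP
      have hPP : P * P = P := by
        rw [hWHW, Matrix.diagonal_mul_diagonal]
        refine congrArg Matrix.diagonal ?_
        funext i
        rw [hent i]
        by_cases h : hH.eigenvalues i = 0 <;> simp [h]
      have hPH : star P = P := by
        rw [Matrix.star_eq_conjTranspose, hWHW, Matrix.diagonal_conjTranspose]
        refine congrArg Matrix.diagonal ?_
        funext i
        rw [Pi.star_apply, hent i]
        by_cases h : hH.eigenvalues i = 0 <;> simp [h]
      have hsq : ‖P‖ * ‖P‖ = ‖P‖ := by
        conv_rhs => rw [← hPP]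
        rw [← CStarRing.norm_star_mul_self (x := P), hPH]
      nlinarith [norm_nonneg P]
    have hWle : ‖W‖ ≤ 1 := by
      have h1 : ‖W‖ * ‖W‖ ≤ 1 := by
        rw [← CStarRing.norm_star_mul_self (x := W), Matrix.star_eq_conjTranspose]
        exact hproj
      nlinarith [norm_nonneg W]
    have hVle : ‖V‖ ≤ 1 := by
      have h1 : ‖V‖ * ‖V‖ ≤ 1 := by
        rw [← CStarRing.norm_star_mul_self (x := V), Matrix.star_eq_conjTranspose, hV1]
        exact matrix_norm_one_le'
      nlinarith [norm_nonneg V]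
    rw [hUW]
    calc ‖V * Wᴴ‖ ≤ ‖V‖ * ‖Wᴴ‖ := Matrix.l2_opNorm_mul V Wᴴ
    _ = ‖V‖ * ‖W‖ := by rw [Matrix.l2_opNorm_conjTranspose]
    _ ≤ 1 * 1 := mul_le_mul hVle hWle (norm_nonneg W) zero_le_one
    _ = 1 := one_mul 1
  · have h1 : X * (V * Matrix.diagonal s * Vᴴ * Xᴴ) =
        (X * V * Matrix.diagonal s) * (Vᴴ * Xᴴ) := by simp only [mul_assoc]
    rw [h1, Matrix.trace_mul_comm]
    have h2 : Vᴴ * Xᴴ * (X * V * Matrix.diagonal s) =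
        (Vᴴ * (Xᴴ * X) * V) * Matrix.diagonal s := by simp only [mul_assoc]
    rw [h2, hspec, Matrix.diagonal_mul_diagonal, Matrix.trace_diagonal]
    rw [show traceNorm X = ∑ i, Real.sqrt (hH.eigenvalues i) from rfl]
    push_cast
    refine Finset.sum_congr rfl fun i _ => ?_
    simp only [Function.comp_apply, hs]
    by_cases h : hH.eigenvalues i = 0
    · simp [h]
    · have hsq : Real.sqrt (hH.eigenvalues i) ≠ 0 := by
        rw [Real.sqrt_ne_zero']
        exact lt_of_le_of_ne (hev i) (Ne.symm h)
      have hlam : (hH.eigenvalues i : ℂ) = ((Real.sqrt (hH.eigenvalues i) : ℂ)) ^ 2 := by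
        rw [← Complex.ofReal_pow, Real.sq_sqrt (hev i)]
      have hne : ((Real.sqrt (hH.eigenvalues i) : ℝ) : ℂ) ≠ 0 := by exact_mod_cast hsq
      simp only [h, if_false]
      rw [hlam]
      field_simp

lemma traceNorm_le_of_forall (A : Matrix (Fin N) (Fin N) ℂ) {r : ℝ}
    (h : ∀ U : Matrix (Fin N) (Fin N) ℂ, ‖U‖ ≤ 1 → ‖Matrix.trace (A * U)‖ ≤ r) :
    traceNorm A ≤ r := by
  obtain ⟨U, hU, htr⟩ := exists_dual_matrix A
  have := h U hU
  rwa [htr, Complex.norm_real, Real.norm_of_nonneg (traceNorm_nonneg' A)] at this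

lemma traceNorm_add_le (A B : Matrix (Fin N) (Fin N) ℂ) :
    traceNorm (A + B) ≤ traceNorm A + traceNorm B := by
  refine traceNorm_le_of_forall _ fun U hU => ?_
  rw [add_mul, Matrix.trace_add]
  calc ‖Matrix.trace (A * U) + Matrix.trace (B * U)‖
      ≤ ‖Matrix.trace (A * U)‖ + ‖Matrix.trace (B * U)‖ := norm_add_le _ _
  _ ≤ traceNorm A * ‖U‖ + traceNorm B * ‖U‖ :=
      add_le_add (norm_trace_mul_le A U) (norm_trace_mul_le B U)
  _ ≤ traceNorm A * 1 + traceNorm B * 1 :=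
      add_le_add (mul_le_mul_of_nonneg_left hU (traceNorm_nonneg' A))
        (mul_le_mul_of_nonneg_left hU (traceNorm_nonneg' B))
  _ = traceNorm A + traceNorm B := by ring

lemma traceNorm_smul_le (c : ℂ) (A : Matrix (Fin N) (Fin N) ℂ) :
    traceNorm (c • A) ≤ ‖c‖ * traceNorm A := by
  refine traceNorm_le_of_forall _ fun U hU => ?_
  rw [smul_mul_assoc, Matrix.trace_smul, smul_eq_mul, norm_mul]
  calc ‖c‖ * ‖Matrix.trace (A * U)‖ ≤ ‖c‖ * (traceNorm A * ‖U‖) :=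
      mul_le_mul_of_nonneg_left (norm_trace_mul_le A U) (norm_nonneg c)
  _ ≤ ‖c‖ * (traceNorm A * 1) := by
      refine mul_le_mul_of_nonneg_left ?_ (norm_nonneg c)
      exact mul_le_mul_of_nonneg_left hU (traceNorm_nonneg' A)
  _ = ‖c‖ * traceNorm A := by ring

lemma traceNorm_zero' : traceNorm (0 : Matrix (Fin N) (Fin N) ℂ) = 0 := by
  have h := traceNorm_smul_le (0 : ℂ) (0 : Matrix (Fin N) (Fin N) ℂ)
  rw [zero_smul, norm_zero, zero_mul] at h
  exact le_antisymm h (traceNorm_nonneg' 0)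

lemma traceNorm_mul_le_left (A B : Matrix (Fin N) (Fin N) ℂ) :
    traceNorm (A * B) ≤ ‖A‖ * traceNorm B := by
  refine traceNorm_le_of_forall _ fun U hU => ?_
  have h1 : Matrix.trace (A * B * U) = Matrix.trace (B * (U * A)) := by
    rw [Matrix.trace_mul_cycle, ← mul_assoc, Matrix.trace_mul_comm, ← mul_assoc]
  rw [h1]
  calc ‖Matrix.trace (B * (U * A))‖ ≤ traceNorm B * ‖U * A‖ := norm_trace_mul_le B (U * A)
  _ ≤ traceNorm B * (‖U‖ * ‖A‖) :=
      mul_le_mul_of_nonneg_left (Matrix.l2_opNorm_mul U A) (traceNorm_nonneg' B)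
  _ ≤ traceNorm B * (1 * ‖A‖) := by
      refine mul_le_mul_of_nonneg_left ?_ (traceNorm_nonneg' B)
      exact mul_le_mul_of_nonneg_right hU (norm_nonneg A)
  _ = ‖A‖ * traceNorm B := by ring

lemma traceNorm_mul_le_right (A B : Matrix (Fin N) (Fin N) ℂ) :
    traceNorm (A * B) ≤ traceNorm A * ‖B‖ := by
  refine traceNorm_le_of_forall _ fun U hU => ?_
  rw [mul_assoc]
  calc ‖Matrix.trace (A * (B * U))‖ ≤ traceNorm A * ‖B * U‖ := norm_trace_mul_le A (B * U)
  _ ≤ traceNorm A * (‖B‖ * ‖U‖) :=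
      mul_le_mul_of_nonneg_left (Matrix.l2_opNorm_mul B U) (traceNorm_nonneg' A)
  _ ≤ traceNorm A * (‖B‖ * 1) := by
      refine mul_le_mul_of_nonneg_left ?_ (traceNorm_nonneg' A)
      exact mul_le_mul_of_nonneg_left hU (norm_nonneg B)
  _ = traceNorm A * ‖B‖ := by ring

lemma traceNorm_sum_le {ι : Type*} (t : Finset ι) (f : ι → Matrix (Fin N) (Fin N) ℂ) :
    traceNorm (∑ i ∈ t, f i) ≤ ∑ i ∈ t, traceNorm (f i) := by
  classical
  induction t using Finset.induction with
  | empty => simp [traceNorm_zero']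
  | insert _ _ hnot ih =>
    rw [Finset.sum_insert hnot, Finset.sum_insert hnot]
    exact le_trans (traceNorm_add_le _ _) (by linarith)

lemma matrix_norm_pow_le {C : ℝ} (M : Matrix (Fin N) (Fin N) ℂ) (hM : ‖M‖ ≤ C) (hC : 1 ≤ C) :
    ∀ r : ℕ, ‖M ^ r‖ ≤ C ^ r := by
  intro r
  induction r with
  | zero => simpa using le_trans matrix_norm_one_le' (by norm_num)
  | succ r ih =>
    rw [pow_succ, pow_succ]
    calc ‖M ^ r * M‖ ≤ ‖M ^ r‖ * ‖M‖ := norm_mul_le _ _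
    _ ≤ C ^ r * C := mul_le_mul ih hM (norm_nonneg M) (pow_nonneg (by linarith) r)

lemma traceNorm_pow_sub_pow_le {C : ℝ} (A B : Matrix (Fin N) (Fin N) ℂ)
    (hA : ‖A‖ ≤ C) (hB : ‖B‖ ≤ C) (hC : 1 ≤ C) :
    ∀ r : ℕ, traceNorm (A ^ r - B ^ r) ≤ (r : ℝ) * C ^ r * traceNorm (A - B) := by
  intro r
  induction r with
  | zero => simp [traceNorm_zero']
  | succ r ih =>
    have hdecomp : A ^ (r + 1) - B ^ (r + 1) = A ^ r * (A - B) + (A ^ r - B ^ r) * B := by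
      rw [mul_sub, sub_mul, pow_succ, pow_succ]
      abel
    have h1 : traceNorm (A ^ r * (A - B)) ≤ C ^ r * traceNorm (A - B) :=
      le_trans (traceNorm_mul_le_left _ _)
        (mul_le_mul_of_nonneg_right (matrix_norm_pow_le A hA hC r) (traceNorm_nonneg' _))
    have h2 : traceNorm ((A ^ r - B ^ r) * B) ≤ ((r : ℝ) * C ^ r * traceNorm (A - B)) * C := by
      refine le_trans (traceNorm_mul_le_right _ _) ?_
      refine mul_le_mul ih hB (norm_nonneg B) ?_
      exact mul_nonneg (mul_nonneg (Nat.cast_nonneg r) (pow_nonneg (by linarith) r))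
        (traceNorm_nonneg' _)
    have hCr : (0:ℝ) ≤ C ^ r := by positivity
    have ht : (0:ℝ) ≤ traceNorm (A - B) := traceNorm_nonneg' _
    calc traceNorm (A ^ (r + 1) - B ^ (r + 1))
        ≤ traceNorm (A ^ r * (A - B)) + traceNorm ((A ^ r - B ^ r) * B) := by
          rw [hdecomp]; exact traceNorm_add_le _ _
    _ ≤ C ^ r * traceNorm (A - B) + ((r : ℝ) * C ^ r * traceNorm (A - B)) * C :=
        add_le_add h1 h2
    _ ≤ ((r : ℕ) + 1 : ℝ) * C ^ (r + 1) * traceNorm (A - B) := by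
        rw [pow_succ]
        nlinarith [mul_nonneg hCr ht, mul_nonneg (mul_nonneg (Nat.cast_nonneg r : (0:ℝ) ≤ r) hCr) ht]
    _ = ((r + 1 : ℕ) : ℝ) * C ^ (r + 1) * traceNorm (A - B) := by push_cast; ring

end TraceNormFacts

/-- **Lemma (asymptotic equivalence is preserved by fixed polynomials).** -/

theorem asympEquiv_poly
    (X Y : ∀ n : ℕ, Matrix (Fin n) (Fin n) ℂ)
    (hXY : AsympEquiv X Y) (P : Polynomial ℂ) :
    AsympEquiv (fun n => Polynomial.aeval (X n) P) (fun n => Polynomial.aeval (Y n) P) := by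
  obtain ⟨⟨C, hC⟩, ho⟩ := hXY
  set C' : ℝ := max C 1 with hC'def
  have hC'1 : 1 ≤ C' := le_max_right C 1
  have hXC : ∀ n, ‖X n‖ ≤ C' := fun n => le_trans ((hC n).1) (le_max_left C 1)
  have hYC : ∀ n, ‖Y n‖ ≤ C' := fun n => le_trans ((hC n).2) (le_max_left C 1)
  set d : ℕ := P.natDegree with hd
  constructor
  · refine ⟨∑ i ∈ Finset.range (d + 1), ‖P.coeff i‖ * C' ^ i, fun n => ?_⟩
    have key : ∀ M : Matrix (Fin n) (Fin n) ℂ, ‖M‖ ≤ C' →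
        specNorm (Polynomial.aeval M P) ≤ ∑ i ∈ Finset.range (d + 1), ‖P.coeff i‖ * C' ^ i := by
      intro M hM
      rw [specNorm_eq_norm, Polynomial.aeval_eq_sum_range]
      refine le_trans (norm_sum_le _ _) (Finset.sum_le_sum fun i _ => ?_)
      rw [norm_smul]
      exact mul_le_mul_of_nonneg_left (matrix_norm_pow_le M hM hC'1 i) (norm_nonneg _)
    exact ⟨key (X n) (hXC n), key (Y n) (hYC n)⟩
  · set K : ℝ := ∑ i ∈ Finset.range (d + 1), ‖P.coeff i‖ * ((i : ℝ) * C' ^ i) with hK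
    have hbound : ∀ n, traceNorm (Polynomial.aeval (X n) P - Polynomial.aeval (Y n) P)
        ≤ K * traceNorm (X n - Y n) := by
      intro n
      have hsplit : Polynomial.aeval (X n) P - Polynomial.aeval (Y n) P
          = ∑ i ∈ Finset.range (d + 1), P.coeff i • ((X n) ^ i - (Y n) ^ i) := by
        rw [Polynomial.aeval_eq_sum_range, Polynomial.aeval_eq_sum_range,
          ← Finset.sum_sub_distrib]
        exact Finset.sum_congr rfl fun i _ => (smul_sub _ _ _).symm
      rw [hsplit, hK, Finset.sum_mul]
      refine le_trans (traceNorm_sum_le _ _) (Finset.sum_le_sum fun i _ => ?_)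
      calc traceNorm (P.coeff i • ((X n) ^ i - (Y n) ^ i))
          ≤ ‖P.coeff i‖ * traceNorm ((X n) ^ i - (Y n) ^ i) := traceNorm_smul_le _ _
      _ ≤ ‖P.coeff i‖ * ((i : ℝ) * C' ^ i * traceNorm (X n - Y n)) :=
          mul_le_mul_of_nonneg_left
            (traceNorm_pow_sub_pow_le (X n) (Y n) (hXC n) (hYC n) hC'1 i) (norm_nonneg _)
      _ = ‖P.coeff i‖ * ((i : ℝ) * C' ^ i) * traceNorm (X n - Y n) := by ring
    have hO : (fun n => traceNorm (Polynomial.aeval (X n) P - Polynomial.aeval (Y n) P))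
        =O[atTop] (fun n => traceNorm (X n - Y n)) := by
      rw [Asymptotics.isBigO_iff]
      refine ⟨K, Filter.Eventually.of_forall fun n => ?_⟩
      rw [Real.norm_of_nonneg (traceNorm_nonneg' _), Real.norm_of_nonneg (traceNorm_nonneg' _)]
      exact hbound n
    exact hO.trans_isLittleO ho
end

section
/- Let f ∈ L^∞(−π,π] and let g be a positive integer. Then the spectral norms of the g-Toeplitz matrices are uniformly bounded: ‖T_{n,g}(f)‖ ≤ ‖f‖_{L^∞} for every n. -/
open MeasureTheory Filter Matrix Polynomial Asymptotics
open scoped Classical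

open scoped ENNReal NNReal

instance : IsFiniteMeasure (volume.restrict Tset) := by
  constructor
  simp only [Tset, Measure.restrict_apply MeasurableSet.univ, Set.univ_inter, Real.volume_Ioc]
  exact ENNReal.ofReal_lt_top


instance : IsFiniteMeasure muT := by
  constructor
  simp only [muT, Tset, Measure.restrict_apply MeasurableSet.univ, Set.univ_inter,
    Real.volume_Ioc]
  exact ENNReal.ofReal_lt_top

lemma cont_integrable {h : ℝ → ℂ} (hh : Continuous h) :
    Integrable h (volume.restrict Tset) :=
  hh.integrableOn_Ioc

lemma cont_exp (c : ℤ) : Continuous fun t : ℝ => Complex.exp (Complex.I * (c : ℂ) * (t : ℂ)) := by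
  fun_prop

lemma norm_exp_I_mul (c : ℤ) (t : ℝ) : ‖Complex.exp (Complex.I * (c:ℂ) * (t:ℂ))‖ = 1 := by
  rw [Complex.norm_exp]
  have : (Complex.I * (c:ℂ) * (t:ℂ)).re = 0 := by
    simp [Complex.mul_re, Complex.mul_im]
  rw [this, Real.exp_zero]

lemma Tset_integral_exp (k : ℤ) :
    ∫ t in Tset, Complex.exp (Complex.I * (k : ℂ) * (t : ℂ)) =
      if k = 0 then (2 * Real.pi : ℂ) else 0 := by
  have hle : (-Real.pi) ≤ Real.pi := by linarith [Real.pi_pos]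
  have hIoc : ∀ h : ℝ → ℂ, (∫ t in Tset, h t) = ∫ t in (-Real.pi)..Real.pi, h t := by
    intro h; rw [intervalIntegral.integral_of_le hle]; rfl
  by_cases hk : k = 0
  · subst hk
    simp only [Int.cast_zero, mul_zero, zero_mul, Complex.exp_zero, if_true]
    rw [MeasureTheory.setIntegral_const]
    simp only [Tset, Real.volume_Ioc]
    rw [Real.volume_real_Ioc_of_le hle]
    rw [Complex.real_smul]
    push_cast
    ring
  · rw [if_neg hk, hIoc]
    have hc : Complex.I * (k : ℂ) ≠ 0 := by
      simp [Complex.I_ne_zero, Complex.ext_iff, hk]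
    calc ∫ t in (-Real.pi)..Real.pi, Complex.exp (Complex.I * (k : ℂ) * (t : ℂ))
        = ∫ t in (-Real.pi)..Real.pi, Complex.exp ((Complex.I * (k : ℂ)) * (t : ℂ)) := by
          simp [mul_assoc]
      _ = (Complex.exp ((Complex.I * k) * Real.pi) - Complex.exp ((Complex.I * k) * (-Real.pi : ℝ))) / (Complex.I * k) := integral_exp_mul_complex hc
      _ = 0 := by
          have : (Complex.I * (k:ℂ)) * (Real.pi:ℂ) = (Complex.I * k) * ((-Real.pi : ℝ):ℂ) + (k:ℂ) * (2 * (Real.pi:ℂ) * Complex.I) := by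
            push_cast; ring
          rw [this, Complex.exp_add, Complex.exp_int_mul_two_pi_mul_I, mul_one, sub_self, zero_div]

lemma l2_trig {n : ℕ} (w : Fin n → ℂ) (c : Fin n → ℤ) (hc : Function.Injective c) :
    ∫ t in Tset, ‖∑ i, w i * Complex.exp (Complex.I * (c i : ℂ) * (t : ℂ))‖ ^ 2 =
      2 * Real.pi * ∑ i, ‖w i‖ ^ 2 := by
  set φ : ℝ → ℂ := fun t => ∑ i, w i * Complex.exp (Complex.I * (c i : ℂ) * (t : ℂ)) with hφ
  have hφc : Continuous φ := by
    apply continuous_finset_sum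
    intro i _
    exact continuous_const.mul (cont_exp (c i))
  have hexpand : ∀ t : ℝ, φ t * (starRingEnd ℂ) (φ t) =
      ∑ i, ∑ j, (w i * (starRingEnd ℂ) (w j)) *
        Complex.exp (Complex.I * ((c i - c j : ℤ) : ℂ) * (t : ℂ)) := by
    intro t
    rw [hφ]
    simp only [map_sum, Finset.sum_mul_sum, _root_.map_mul]
    refine Finset.sum_congr rfl fun i _ => Finset.sum_congr rfl fun j _ => ?_
    rw [← Complex.exp_conj]
    have harg : (starRingEnd ℂ) (Complex.I * (c j : ℂ) * (t : ℂ)) =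
        -(Complex.I * (c j : ℂ) * (t : ℂ)) := by
      simp [_root_.map_mul, Complex.conj_I, Complex.conj_ofReal]
    rw [harg]
    rw [show Complex.exp (Complex.I * ((c i - c j : ℤ) : ℂ) * (t : ℂ)) =
        Complex.exp (Complex.I * (c i : ℂ) * (t : ℂ)) *
          Complex.exp (-(Complex.I * (c j : ℂ) * (t : ℂ))) from by
      rw [← Complex.exp_add]; congr 1; push_cast; ring]
    ring
  have hintg : ∀ (i j : Fin n), Integrable
      (fun t : ℝ => (w i * (starRingEnd ℂ) (w j)) *
        Complex.exp (Complex.I * ((c i - c j : ℤ) : ℂ) * (t : ℂ))) (volume.restrict Tset) :=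
    fun i j => cont_integrable (continuous_const.mul (cont_exp _))
  have key : (∫ t in Tset, φ t * (starRingEnd ℂ) (φ t)) =
      ((2 * Real.pi * ∑ i, ‖w i‖ ^ 2 : ℝ) : ℂ) := by
    calc (∫ t in Tset, φ t * (starRingEnd ℂ) (φ t))
        = ∫ t in Tset, ∑ i, ∑ j, (w i * (starRingEnd ℂ) (w j)) *
            Complex.exp (Complex.I * ((c i - c j : ℤ) : ℂ) * (t : ℂ)) := by
          exact integral_congr_ae (Filter.Eventually.of_forall hexpand)
      _ = ∑ i, ∑ j, ∫ t in Tset, (w i * (starRingEnd ℂ) (w j)) *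
            Complex.exp (Complex.I * ((c i - c j : ℤ) : ℂ) * (t : ℂ)) := by
          rw [integral_finset_sum _ (fun i _ => integrable_finset_sum _ (fun j _ => hintg i j))]
          exact Finset.sum_congr rfl fun i _ => integral_finset_sum _ (fun j _ => hintg i j)
      _ = ∑ i, ∑ j, (w i * (starRingEnd ℂ) (w j)) *
            (if (c i - c j : ℤ) = 0 then (2 * Real.pi : ℂ) else 0) := by
          refine Finset.sum_congr rfl fun i _ => Finset.sum_congr rfl fun j _ => ?_
          rw [MeasureTheory.integral_const_mul, Tset_integral_exp]
      _ = ∑ i, (w i * (starRingEnd ℂ) (w i)) * (2 * Real.pi : ℂ) := by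
          refine Finset.sum_congr rfl fun i _ => ?_
          rw [Finset.sum_eq_single i]
          · simp
          · intro j _ hji
            rw [if_neg, mul_zero]
            rw [sub_eq_zero]
            exact fun h => hji (hc h.symm)
          · intro h; exact absurd (Finset.mem_univ i) h
      _ = ((2 * Real.pi * ∑ i, ‖w i‖ ^ 2 : ℝ) : ℂ) := by
          push_cast
          rw [Finset.mul_sum]
          refine Finset.sum_congr rfl fun i _ => ?_
          rw [Complex.mul_conj]
          rw [Complex.normSq_eq_norm_sq]
          push_cast
          ring
  have hre : ∀ t : ℝ, ‖φ t‖ ^ 2 = (φ t * (starRingEnd ℂ) (φ t)).re := by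
    intro t
    rw [Complex.mul_conj, Complex.normSq_eq_norm_sq]
    exact (Complex.ofReal_re _).symm
  calc ∫ t in Tset, ‖φ t‖ ^ 2 = ∫ t in Tset, (φ t * (starRingEnd ℂ) (φ t)).re := by
        exact integral_congr_ae (Filter.Eventually.of_forall hre)
    _ = (∫ t in Tset, φ t * (starRingEnd ℂ) (φ t)).re := by
        exact integral_re (cont_integrable (hφc.mul (Complex.continuous_conj.comp hφc)))
    _ = 2 * Real.pi * ∑ i, ‖w i‖ ^ 2 := by rw [key]; exact Complex.ofReal_re _
lemma linfNorm_nonneg (f : ℝ → ℂ) : 0 ≤ linfNorm f := ENNReal.toReal_nonneg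

lemma ae_norm_le (f : ℝ → ℂ) (hf : MemLinf f) :
    ∀ᵐ t ∂(volume.restrict Tset), ‖f t‖ ≤ linfNorm f := by
  have h1 := enorm_ae_le_eLpNormEssSup f (volume.restrict Tset)
  have hfin : eLpNormEssSup f (volume.restrict Tset) ≠ ⊤ := by
    have h2 : eLpNorm f ⊤ muT < ⊤ := hf.2
    rw [eLpNorm_exponent_top] at h2
    exact h2.ne
  filter_upwards [h1] with t ht
  calc ‖f t‖ = ((‖f t‖₊ : ℝ≥0∞)).toReal := by simp
    _ ≤ (eLpNormEssSup f (volume.restrict Tset)).toReal := ENNReal.toReal_mono hfin ht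
    _ = linfNorm f := by rw [linfNorm, eLpNorm_exponent_top]; rfl

lemma bilinear_bound (f : ℝ → ℂ) (hf : MemLinf f) {g : ℕ} (hg : 0 < g) {n : ℕ}
    (u v : Fin n → ℂ) :
    ‖∑ r : Fin n, ∑ s : Fin n, (starRingEnd ℂ) (v r) * gToeplitz n g f r s * u s‖ ≤
      linfNorm f * (Real.sqrt (∑ r, ‖v r‖ ^ 2) * Real.sqrt (∑ s, ‖u s‖ ^ 2)) := by
  classical
  set cA : Fin n → ℤ := fun r => -(r : ℤ) with hcAdef
  set cB : Fin n → ℤ := fun s => (g : ℤ) * (s : ℤ) with hcBdef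
  have hcA : Function.Injective cA := by
    intro a b h
    have h1 : (a : ℤ) = (b : ℤ) := neg_injective h
    have h2 : (a : ℕ) = (b : ℕ) := by exact_mod_cast h1
    exact Fin.ext h2
  have hcB : Function.Injective cB := by
    intro a b h
    have hg' : (g : ℤ) ≠ 0 := by exact_mod_cast hg.ne'
    have h1 : (a : ℤ) = (b : ℤ) := mul_left_cancel₀ hg' h
    have h2 : (a : ℕ) = (b : ℕ) := by exact_mod_cast h1
    exact Fin.ext h2
  set A : ℝ → ℂ := fun t => ∑ r, (starRingEnd ℂ) (v r) *
    Complex.exp (Complex.I * (cA r : ℂ) * (t : ℂ)) with hAdef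
  set B : ℝ → ℂ := fun t => ∑ s, u s *
    Complex.exp (Complex.I * (cB s : ℂ) * (t : ℂ)) with hBdef
  have hAc : Continuous A := by
    apply continuous_finset_sum; intro i _; exact continuous_const.mul (cont_exp _)
  have hBc : Continuous B := by
    apply continuous_finset_sum; intro i _; exact continuous_const.mul (cont_exp _)
  have hterm : ∀ r s : Fin n, (starRingEnd ℂ) (v r) * gToeplitz n g f r s * u s =
      (1 / (2 * (Real.pi : ℂ))) * ∫ t in Tset, ((starRingEnd ℂ) (v r) *
          Complex.exp (Complex.I * (cA r : ℂ) * (t : ℂ))) *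
        (u s * Complex.exp (Complex.I * (cB s : ℂ) * (t : ℂ))) * f t := by
    intro r s
    have hpt : ∀ t : ℝ, ((starRingEnd ℂ) (v r) *
          Complex.exp (Complex.I * (cA r : ℂ) * (t : ℂ))) *
        (u s * Complex.exp (Complex.I * (cB s : ℂ) * (t : ℂ))) * f t =
        ((starRingEnd ℂ) (v r) * u s) *
          (f t * Complex.exp (-Complex.I * ((((r : ℤ) - (g : ℤ) * (s : ℤ)) : ℤ) : ℂ) * (t : ℂ))) := by
      intro t
      rw [show Complex.exp (-Complex.I * ((((r : ℤ) - (g : ℤ) * (s : ℤ)) : ℤ) : ℂ) * (t : ℂ)) =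
          Complex.exp (Complex.I * (cA r : ℂ) * (t : ℂ)) *
            Complex.exp (Complex.I * (cB s : ℂ) * (t : ℂ)) from by
        rw [← Complex.exp_add]; congr 1; rw [hcAdef, hcBdef]; push_cast; ring]
      ring
    calc (starRingEnd ℂ) (v r) * gToeplitz n g f r s * u s
        = ((starRingEnd ℂ) (v r) * u s) * fhat f ((r : ℤ) - (g : ℤ) * (s : ℤ)) := by
          simp only [gToeplitz, Matrix.of_apply]; ring
      _ = (1 / (2 * (Real.pi : ℂ))) * ∫ t in Tset, ((starRingEnd ℂ) (v r) * u s) *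
            (f t * Complex.exp (-Complex.I * ((((r : ℤ) - (g : ℤ) * (s : ℤ)) : ℤ) : ℂ) * (t : ℂ))) := by
          rw [fhat, MeasureTheory.integral_const_mul]; ring
      _ = (1 / (2 * (Real.pi : ℂ))) * ∫ t in Tset, ((starRingEnd ℂ) (v r) *
            Complex.exp (Complex.I * (cA r : ℂ) * (t : ℂ))) *
          (u s * Complex.exp (Complex.I * (cB s : ℂ) * (t : ℂ))) * f t := by
          congr 1
          exact (integral_congr_ae (Filter.Eventually.of_forall hpt)).symm
  have hfint : Integrable f (volume.restrict Tset) := by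
    have : IsFiniteMeasure muT := by
      constructor
      simp only [muT, Tset, Measure.restrict_apply MeasurableSet.univ, Set.univ_inter,
        Real.volume_Ioc]
      exact ENNReal.ofReal_lt_top
    exact hf.integrable le_top
  have hFint : ∀ r s : Fin n, Integrable (fun t : ℝ => ((starRingEnd ℂ) (v r) *
      Complex.exp (Complex.I * (cA r : ℂ) * (t : ℂ))) *
        (u s * Complex.exp (Complex.I * (cB s : ℂ) * (t : ℂ))) * f t)
      (volume.restrict Tset) := by
    intro r s
    apply Integrable.bdd_mul (c := ‖v r‖ * ‖u s‖) hfint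
    · exact ((continuous_const.mul (cont_exp _)).mul
        (continuous_const.mul (cont_exp _))).aestronglyMeasurable
    · refine Filter.Eventually.of_forall fun t => ?_
      rw [norm_mul, norm_mul, norm_mul, RCLike.norm_conj, norm_exp_I_mul, norm_exp_I_mul,
        mul_one, mul_one]
  have hsum : ∑ r : Fin n, ∑ s : Fin n, (starRingEnd ℂ) (v r) * gToeplitz n g f r s * u s =
      (1 / (2 * (Real.pi : ℂ))) * ∫ t in Tset, A t * B t * f t := by
    simp_rw [hterm, ← Finset.mul_sum]
    congr 1
    calc ∑ r : Fin n, ∑ s : Fin n, ∫ t in Tset, ((starRingEnd ℂ) (v r) *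
            Complex.exp (Complex.I * (cA r : ℂ) * (t : ℂ))) *
          (u s * Complex.exp (Complex.I * (cB s : ℂ) * (t : ℂ))) * f t
        = ∑ r : Fin n, ∫ t in Tset, ∑ s : Fin n, ((starRingEnd ℂ) (v r) *
            Complex.exp (Complex.I * (cA r : ℂ) * (t : ℂ))) *
          (u s * Complex.exp (Complex.I * (cB s : ℂ) * (t : ℂ))) * f t :=
          Finset.sum_congr rfl fun r _ => (integral_finset_sum _ fun s _ => hFint r s).symm
      _ = ∫ t in Tset, ∑ r : Fin n, ∑ s : Fin n, ((starRingEnd ℂ) (v r) *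
            Complex.exp (Complex.I * (cA r : ℂ) * (t : ℂ))) *
          (u s * Complex.exp (Complex.I * (cB s : ℂ) * (t : ℂ))) * f t :=
          (integral_finset_sum _ fun r _ => integrable_finset_sum _ fun s _ => hFint r s).symm
      _ = ∫ t in Tset, A t * B t * f t := by
          refine integral_congr_ae (Filter.Eventually.of_forall fun t => ?_)
          simp only [hAdef, hBdef]
          rw [Finset.sum_mul_sum, Finset.sum_mul]
          simp_rw [Finset.sum_mul]
  have h2pi : (0:ℝ) < 2 * Real.pi := by positivity
  have hA2 : MemLp A (ENNReal.ofReal 2) (volume.restrict Tset) := by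
    refine MemLp.mono_exponent (q := ⊤) ?_ le_top
    refine memLp_top_of_bound hAc.aestronglyMeasurable (∑ r, ‖v r‖)
      (Filter.Eventually.of_forall fun t => ?_)
    simp only [hAdef]
    refine (norm_sum_le _ _).trans ?_
    refine le_of_eq (Finset.sum_congr rfl fun r _ => ?_)
    rw [norm_mul, norm_exp_I_mul, mul_one, RCLike.norm_conj]
  have hB2 : MemLp B (ENNReal.ofReal 2) (volume.restrict Tset) := by
    refine MemLp.mono_exponent (q := ⊤) ?_ le_top
    refine memLp_top_of_bound hBc.aestronglyMeasurable (∑ s, ‖u s‖)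
      (Filter.Eventually.of_forall fun t => ?_)
    simp only [hBdef]
    refine (norm_sum_le _ _).trans ?_
    refine le_of_eq (Finset.sum_congr rfl fun s _ => ?_)
    rw [norm_mul, norm_exp_I_mul, mul_one]
  have hconv : ∀ h : ℝ → ℂ, (∫ t in Tset, ‖h t‖ ^ (2:ℝ)) = ∫ t in Tset, ‖h t‖ ^ 2 :=
    fun h => integral_congr_ae (Filter.Eventually.of_forall fun t => by
      show ‖h t‖ ^ (2:ℝ) = (‖h t‖ ^ (2:ℕ) : ℝ)
      rw [← Real.rpow_natCast (‖h t‖) 2]; norm_num)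
  have hAl2 : (∫ t in Tset, ‖A t‖ ^ 2) = 2 * Real.pi * ∑ r, ‖v r‖ ^ 2 := by
    simp only [hAdef]
    have := l2_trig (fun r => (starRingEnd ℂ) (v r)) cA hcA
    simp only [RCLike.norm_conj] at this
    exact this
  have hBl2 : (∫ t in Tset, ‖B t‖ ^ 2) = 2 * Real.pi * ∑ s, ‖u s‖ ^ 2 := by
    simp only [hBdef]
    exact l2_trig u cB hcB
  have h_holder : ∫ t in Tset, ‖A t‖ * ‖B t‖ ≤
      Real.sqrt (2 * Real.pi * ∑ r, ‖v r‖ ^ 2) *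
        Real.sqrt (2 * Real.pi * ∑ s, ‖u s‖ ^ 2) := by
    have h22 : Real.HolderConjugate 2 2 := Real.holderConjugate_iff.mpr ⟨one_lt_two, by norm_num⟩
    have h := integral_mul_norm_le_Lp_mul_Lq (μ := volume.restrict Tset) h22 hA2 hB2
    rw [hconv A, hconv B, hAl2, hBl2, ← Real.sqrt_eq_rpow, ← Real.sqrt_eq_rpow] at h
    exact h
  have hnorm_c : ‖(1 / (2 * (Real.pi:ℂ)))‖ = 1 / (2 * Real.pi) := by
    rw [show (1 / (2 * (Real.pi:ℂ))) = (((1 / (2 * Real.pi) : ℝ)):ℂ) from by push_cast; ring,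
      Complex.norm_real, Real.norm_of_nonneg (by positivity)]
  have hABf : ‖∫ t in Tset, A t * B t * f t‖ ≤
      ∫ t in Tset, linfNorm f * (‖A t‖ * ‖B t‖) := by
    apply norm_integral_le_of_norm_le
    · exact (continuous_const.mul (hAc.norm.mul hBc.norm)).integrableOn_Ioc
    · filter_upwards [ae_norm_le f hf] with t ht
      rw [norm_mul, norm_mul]
      calc ‖A t‖ * ‖B t‖ * ‖f t‖ ≤ ‖A t‖ * ‖B t‖ * linfNorm f :=
            mul_le_mul_of_nonneg_left ht (by positivity)
        _ = linfNorm f * (‖A t‖ * ‖B t‖) := by ring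
  have hsqrtmul : Real.sqrt (2 * Real.pi * ∑ r, ‖v r‖ ^ 2) *
      Real.sqrt (2 * Real.pi * ∑ s, ‖u s‖ ^ 2) =
      (2 * Real.pi) * (Real.sqrt (∑ r, ‖v r‖ ^ 2) * Real.sqrt (∑ s, ‖u s‖ ^ 2)) := by
    rw [Real.sqrt_mul h2pi.le, Real.sqrt_mul h2pi.le]
    rw [show (Real.sqrt (2 * Real.pi) * Real.sqrt (∑ r, ‖v r‖ ^ 2)) *
        (Real.sqrt (2 * Real.pi) * Real.sqrt (∑ s, ‖u s‖ ^ 2)) =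
        (Real.sqrt (2 * Real.pi) * Real.sqrt (2 * Real.pi)) *
        (Real.sqrt (∑ r, ‖v r‖ ^ 2) * Real.sqrt (∑ s, ‖u s‖ ^ 2)) from by ring]
    rw [Real.mul_self_sqrt h2pi.le]
  calc ‖∑ r : Fin n, ∑ s : Fin n, (starRingEnd ℂ) (v r) * gToeplitz n g f r s * u s‖
      = (1 / (2 * Real.pi)) * ‖∫ t in Tset, A t * B t * f t‖ := by
        rw [hsum, norm_mul, hnorm_c]
    _ ≤ (1 / (2 * Real.pi)) * (linfNorm f * (Real.sqrt (2 * Real.pi * ∑ r, ‖v r‖ ^ 2) *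
          Real.sqrt (2 * Real.pi * ∑ s, ‖u s‖ ^ 2))) := by
        apply mul_le_mul_of_nonneg_left _ (by positivity)
        calc ‖∫ t in Tset, A t * B t * f t‖
            ≤ ∫ t in Tset, linfNorm f * (‖A t‖ * ‖B t‖) := hABf
          _ = linfNorm f * ∫ t in Tset, ‖A t‖ * ‖B t‖ := MeasureTheory.integral_const_mul _ _
          _ ≤ linfNorm f * (Real.sqrt (2 * Real.pi * ∑ r, ‖v r‖ ^ 2) *
              Real.sqrt (2 * Real.pi * ∑ s, ‖u s‖ ^ 2)) :=
            mul_le_mul_of_nonneg_left h_holder (linfNorm_nonneg f)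
    _ = linfNorm f * (Real.sqrt (∑ r, ‖v r‖ ^ 2) * Real.sqrt (∑ s, ‖u s‖ ^ 2)) := by
        rw [hsqrtmul]
        field_simp

/-- **Lemma (uniform boundedness of g-Toeplitz matrices).** -/
theorem specNorm_gToeplitz_le
    (f : ℝ → ℂ) (hf : MemLinf f) (g : ℕ) (hg : 0 < g) :
    ∀ n, specNorm (gToeplitz n g f) ≤ linfNorm f := by
  intro n
  rw [specNorm]
  refine ContinuousLinearMap.opNorm_le_bound _ (linfNorm_nonneg f) (fun u => ?_)
  set X := gToeplitz n g f with hX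
  set w : EuclideanSpace ℂ (Fin n) := Matrix.toEuclideanCLM (𝕜 := ℂ) X u with hw
  have hwr : ∀ r, w r = ∑ s, X r s * u s := by
    intro r
    have h1 := Matrix.ofLp_toEuclideanCLM (n := Fin n) (𝕜 := ℂ) X u
    have h2 := congrFun h1 r
    calc w r = (WithLp.equiv 2 (Fin n → ℂ)) w r := rfl
      _ = X.mulVec ((WithLp.equiv 2 (Fin n → ℂ)) u) r := h2
      _ = ∑ s, X r s * u s := rfl
  have hnorm_w : ‖w‖ = Real.sqrt (∑ r, ‖w r‖ ^ 2) := EuclideanSpace.norm_eq w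
  clear_value w
  have hnorm_u : ‖u‖ = Real.sqrt (∑ s, ‖u s‖ ^ 2) := by
    rw [EuclideanSpace.norm_eq]
  have key : ((‖w‖ ^ 2 : ℝ) : ℂ) =
      ∑ r : Fin n, ∑ s : Fin n, (starRingEnd ℂ) (w r) * X r s * u s := by
    have : ∀ r : Fin n, ∑ s : Fin n, (starRingEnd ℂ) (w r) * X r s * u s =
        (starRingEnd ℂ) (w r) * w r := by
      intro r
      rw [hwr r, Finset.mul_sum]
      exact Finset.sum_congr rfl fun s _ => by ring
    rw [Finset.sum_congr rfl fun r _ => this r]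
    rw [hnorm_w, Real.sq_sqrt (Finset.sum_nonneg fun r _ => sq_nonneg _)]
    push_cast
    refine Finset.sum_congr rfl fun r _ => ?_
    rw [← Complex.ofReal_pow, mul_comm, Complex.mul_conj, Complex.normSq_eq_norm_sq]
  have hb := bilinear_bound f hf hg (n := n) u w
  have hfinal : ‖w‖ ^ 2 ≤ linfNorm f * (‖w‖ * ‖u‖) := by
    calc ‖w‖ ^ 2 = ‖((‖w‖ ^ 2 : ℝ) : ℂ)‖ := by
          rw [Complex.norm_real, Real.norm_of_nonneg (by positivity)]
      _ = ‖∑ r : Fin n, ∑ s : Fin n, (starRingEnd ℂ) (w r) * X r s * u s‖ := by rw [key]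
      _ ≤ linfNorm f * (Real.sqrt (∑ r, ‖w r‖ ^ 2) * Real.sqrt (∑ s, ‖u s‖ ^ 2)) := hb
      _ = linfNorm f * (‖w‖ * ‖u‖) := by rw [hnorm_w, hnorm_u]
  rcases eq_or_lt_of_le (norm_nonneg w) with h0 | h0
  · rw [← h0]
    exact mul_nonneg (linfNorm_nonneg f) (norm_nonneg u)
  · nlinarith [hfinal, norm_nonneg u, h0]
end

section
/- Let f ∈ L^∞(−π,π], let g ≥ 2 be an integer, and set μ_g = ⌈n/g⌉. Let 𝒯_{n,g} be the n×(n−μ_g) matrix formed by the last n−μ_g columns of T_{n,g}(f), and let [0|𝒯_{n,g}] be the n×n matrix obtained by prepending μ_g zero columns. Then ‖[0|𝒯_{n,g}]‖_1 = o(n) as n → ∞. -/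
open MeasureTheory Filter Matrix Polynomial Asymptotics
open scoped Classical

open scoped ENNReal NNReal Topology

noncomputable section Aux

/-- Sum of eigenvalues of a Hermitian matrix equals its trace. -/
lemma aux_sum_eigen {N : ℕ} (A : Matrix (Fin N) (Fin N) ℂ) (hA : A.IsHermitian) :
    ((∑ i, hA.eigenvalues i : ℝ) : ℂ) = A.trace := by
  symm
  have h := hA.spectral_theorem
  set U := (hA.eigenvectorUnitary : Matrix (Fin N) (Fin N) ℂ) with hUdef
  have hU : star U * U = 1 := by
    simpa [hUdef] using (Matrix.mem_unitaryGroup_iff').mp hA.eigenvectorUnitary.2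
  calc A.trace = (U * (Matrix.diagonal (RCLike.ofReal ∘ hA.eigenvalues) * star U)).trace := by
        rw [← mul_assoc]
        conv_lhs => rw [h]
        simp [hUdef]
    _ = ((Matrix.diagonal (RCLike.ofReal ∘ hA.eigenvalues) * star U) * U).trace :=
        Matrix.trace_mul_comm _ _
    _ = (Matrix.diagonal (RCLike.ofReal ∘ hA.eigenvalues)).trace := by
        rw [mul_assoc, hU, mul_one]
    _ = ((∑ i, hA.eigenvalues i : ℝ) : ℂ) := by
        rw [Matrix.trace_diagonal]
        push_cast
        rfl

/-- The trace norm is bounded by `√(N · ‖X‖_F²)`. -/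
lemma aux_traceNorm_le {N : ℕ} (X : Matrix (Fin N) (Fin N) ℂ) :
    traceNorm X ≤ Real.sqrt (N * ∑ r, ∑ s, ‖X r s‖ ^ 2) := by
  have hH := Matrix.isHermitian_conjTranspose_mul_self X
  have hnn : ∀ i, 0 ≤ hH.eigenvalues i :=
    Matrix.eigenvalues_conjTranspose_mul_self_nonneg X
  have htn0 : 0 ≤ traceNorm X :=
    Finset.sum_nonneg fun i _ => Real.sqrt_nonneg _
  have hsum : (∑ i, hH.eigenvalues i) = ∑ r, ∑ s, ‖X r s‖ ^ 2 := by
    have h1 := aux_sum_eigen (Xᴴ * X) hH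
    have h2 : (Xᴴ * X).trace = ((∑ r, ∑ s, ‖X r s‖ ^ 2 : ℝ) : ℂ) := by
      rw [Matrix.trace]
      have : ∀ s : Fin N, (Xᴴ * X).diag s = ((∑ r, ‖X r s‖ ^ 2 : ℝ) : ℂ) := by
        intro s
        rw [Matrix.diag_apply, Matrix.mul_apply]
        push_cast
        refine Finset.sum_congr rfl fun r _ => ?_
        rw [Matrix.conjTranspose_apply, Complex.star_def, mul_comm, Complex.mul_conj']
      rw [Finset.sum_congr rfl fun s _ => this s]
      push_cast
      rw [Finset.sum_comm]
    rw [h2] at h1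
    exact_mod_cast h1
  have hCS : traceNorm X ^ 2 ≤ N * ∑ i, hH.eigenvalues i := by
    have h := Finset.sum_mul_sq_le_sq_mul_sq Finset.univ (fun _ : Fin N => (1 : ℝ))
      (fun i => Real.sqrt (hH.eigenvalues i))
    have e1 : (∑ i, (1 : ℝ) * Real.sqrt (hH.eigenvalues i)) = traceNorm X := by
      simp [traceNorm, singVals]
    have e2 : (∑ _i : Fin N, (1 : ℝ) ^ 2) = (N : ℝ) := by simp
    have e3 : (∑ i, Real.sqrt (hH.eigenvalues i) ^ 2) = ∑ i, hH.eigenvalues i :=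
      Finset.sum_congr rfl fun i _ => Real.sq_sqrt (hnn i)
    rw [e1, e2, e3] at h
    exact h
  rw [hsum] at hCS
  calc traceNorm X = Real.sqrt (traceNorm X ^ 2) := (Real.sqrt_sq htn0).symm
    _ ≤ Real.sqrt (N * ∑ r, ∑ s, ‖X r s‖ ^ 2) := Real.sqrt_le_sqrt hCS

/-- Bessel / Parseval: the squared Fourier coefficients of an `L^∞` function are summable. -/
lemma aux_summable_fhat_sq (f : ℝ → ℂ) (hf : MemLinf f) :
    Summable fun k : ℤ => ‖fhat f k‖ ^ 2 := by
  haveI : Fact (0 < 2 * Real.pi) := ⟨by positivity⟩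
  obtain ⟨hmeas, hbound⟩ := hf
  set g0 := hmeas.mk f with hg0
  have hsm : StronglyMeasurable g0 := hmeas.stronglyMeasurable_mk
  have hfg : f =ᵐ[muT] g0 := hmeas.ae_eq_mk
  have hfhat : ∀ k, fhat f k = fhat g0 k := by
    intro k
    unfold fhat
    congr 1
    refine integral_congr_ae ?_
    have hfg' : f =ᵐ[volume.restrict Tset] g0 := hfg
    filter_upwards [hfg'] with t ht
    rw [ht]
  set C := (eLpNormEssSup f muT).toReal with hCdef
  have hC : ∀ᵐ t ∂muT, ‖g0 t‖ ≤ C := by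
    have h1 : ∀ᵐ t ∂muT, (‖f t‖₊ : ℝ≥0∞) ≤ eLpNormEssSup f muT := ae_le_eLpNormEssSup
    have hfin : eLpNormEssSup f muT ≠ ⊤ := by
      have := hbound.ne
      rwa [eLpNorm_exponent_top] at this
    filter_upwards [h1, hfg] with t h1t h2t
    rw [← h2t]
    calc ‖f t‖ = ((‖f t‖₊ : ℝ≥0∞)).toReal := by simp
      _ ≤ C := ENNReal.toReal_mono hfin h1t
  set T : ℝ := 2 * Real.pi with hTdef
  set F : AddCircle T → ℂ := AddCircle.liftIoc T (-Real.pi) g0 with hFdef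
  have hFsm : StronglyMeasurable F := by
    have : F = (g0 ∘ Subtype.val) ∘ (AddCircle.measurableEquivIoc T (-Real.pi)) := rfl
    rw [this]
    exact hsm.comp_measurable
      (measurable_subtype_coe.comp (AddCircle.measurableEquivIoc T (-Real.pi)).measurable)
  have hendpoint : -Real.pi + T = Real.pi := by rw [hTdef]; ring
  have hIoc : Set.Ioc (-Real.pi) (-Real.pi + T) = Tset := by
    rw [hendpoint]; rfl
  have hmp : MeasurePreserving ((↑) : ℝ → AddCircle T)
      (volume.restrict (Set.Ioc (-Real.pi) (-Real.pi + T))) volume :=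
    AddCircle.measurePreserving_mk T (-Real.pi)
  have hFb : ∀ᵐ x ∂(volume : Measure (AddCircle T)), ‖F x‖ ≤ C := by
    have hms : MeasurableSet {x : AddCircle T | ‖F x‖ ≤ C} :=
      measurableSet_le hFsm.measurable.norm measurable_const
    rw [← hmp.map_eq, ae_map_iff hmp.measurable.aemeasurable hms]
    have hCrest : ∀ᵐ t ∂(volume.restrict (Set.Ioc (-Real.pi) (-Real.pi + T))), ‖g0 t‖ ≤ C := by
      rw [hIoc]; exact hC
    have hmem : ∀ᵐ t ∂(volume.restrict (Set.Ioc (-Real.pi) (-Real.pi + T))),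
        t ∈ Set.Ioc (-Real.pi) (-Real.pi + T) := ae_restrict_mem measurableSet_Ioc
    filter_upwards [hCrest, hmem] with t h1t h2t
    show ‖F ((t : ℝ) : AddCircle T)‖ ≤ C
    rw [hFdef, AddCircle.liftIoc_coe_apply h2t]
    exact h1t
  have hmem2 : MemLp F 2 (volume : Measure (AddCircle T)) :=
    (memLp_top_of_bound hFsm.aestronglyMeasurable C hFb).mono_exponent le_top
  have hofT0 : (ENNReal.ofReal T) ≠ 0 := (ENNReal.ofReal_pos.mpr (by positivity)).ne'
  have hmemh : MemLp F 2 (AddCircle.haarAddCircle : Measure (AddCircle T)) := by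
    have hhaar : (AddCircle.haarAddCircle : Measure (AddCircle T)) =
        (ENNReal.ofReal T)⁻¹ • (volume : Measure (AddCircle T)) := by
      rw [AddCircle.volume_eq_smul_haarAddCircle]
      rw [smul_smul, ENNReal.inv_mul_cancel hofT0 ENNReal.ofReal_ne_top, one_smul]
    rw [hhaar]
    exact hmem2.smul_measure (ENNReal.inv_ne_top.mpr hofT0)
  set L := hmemh.toLp F with hLdef
  have hLF : ∀ i : ℤ, fourierCoeff (⇑L) i = fourierCoeff F i := by
    intro i
    unfold fourierCoeff
    refine integral_congr_ae ?_
    filter_upwards [hmemh.coeFn_toLp] with x hx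
    rw [hx]
  have key : ∀ k : ℤ, fourierCoeff F k = fhat f k := by
    intro k
    rw [fourierCoeff_eq_intervalIntegral F k (-Real.pi)]
    rw [intervalIntegral.integral_of_le (by linarith [Real.pi_pos, hendpoint])]
    rw [hfhat k]
    unfold fhat
    rw [← hIoc]
    have hint : ∀ᵐ x ∂(volume.restrict (Set.Ioc (-Real.pi) (-Real.pi + T))),
        (fourier (-k) ((x : ℝ) : AddCircle T) : ℂ) • F ((x : ℝ) : AddCircle T) =
          g0 x * Complex.exp (-Complex.I * (k : ℂ) * (x : ℂ)) := by
      filter_upwards [ae_restrict_mem measurableSet_Ioc] with x hx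
      rw [hFdef, AddCircle.liftIoc_coe_apply hx, fourier_coe_apply, smul_eq_mul, mul_comm]
      congr 1
      rw [hTdef]
      have hpi : (Real.pi : ℂ) ≠ 0 := Complex.ofReal_ne_zero.mpr Real.pi_ne_zero
      push_cast
      congr 1
      field_simp [Complex.ofReal_ne_zero.mpr Real.pi_ne_zero]
    rw [integral_congr_ae hint, Complex.real_smul]
    congr 1
    rw [hTdef]
    push_cast
    ring
  have hs2 : Summable fun i : ℤ => ‖(fourierBasis.repr L) i‖ ^ ((2 : ℝ≥0∞)).toReal :=
    (memℓp_gen_iff (by norm_num)).mp (lp.memℓp (fourierBasis.repr L))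
  refine hs2.congr fun i => ?_
  rw [fourierBasis_repr, hLF, key]
  norm_num

end Aux

/-- **Lemma (the padded tail of a g-Toeplitz matrix has small trace norm).**
`‖[0 | 𝒯_{n,g}]‖₁ = o(n)`. -/
theorem traceNorm_padT_isLittleO
    (f : ℝ → ℂ) (hf : MemLinf f) (g : ℕ) (hg : 2 ≤ g) :
    (fun n => traceNorm (padT n g f)) =o[atTop] (fun n => (n : ℝ)) := by
  classical
  set c : ℕ → ℝ := fun i => ‖fhat f (-(i : ℤ))‖ ^ 2 with hcdef
  have hc : Summable c := by
    have h := (aux_summable_fhat_sq f hf).comp_injective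
      (i := fun i : ℕ => -(i : ℤ)) (fun a b h => by simpa using h)
    exact h
  have hc0 : ∀ i, 0 ≤ c i := fun i => sq_nonneg _
  set t : ℕ → ℝ := fun j => ∑' k, c (k + (j + 1)) with htdef
  have htsum : ∀ j : ℕ, Summable fun k => c (k + (j + 1)) := fun j =>
    hc.comp_injective (add_left_injective (j + 1))
  have ht0 : ∀ j, 0 ≤ t j := fun j => tsum_nonneg fun k => hc0 _
  have htt : Tendsto t atTop (𝓝 0) :=
    (tendsto_sum_nat_add c).comp (tendsto_add_atTop_nat 1)
  set S : ℕ → ℝ := fun n => ∑ j ∈ Finset.range n, t j with hSdef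
  have hS0 : ∀ n, 0 ≤ S n := fun n => Finset.sum_nonneg fun j _ => ht0 j
  have hces : Tendsto (fun n : ℕ => S n / n) atTop (𝓝 0) := by
    have h := htt.cesaro
    refine h.congr fun n => ?_
    rw [div_eq_inv_mul]
  have hgpos : 0 < g := lt_of_lt_of_le two_pos hg
  have hgmug : ∀ n : ℕ, n ≤ g * mug n g := by
    intro n
    have h1 := Nat.div_add_mod (n + g - 1) g
    have h2 : (n + g - 1) % g < g := Nat.mod_lt _ hgpos
    unfold mug
    set q := (n + g - 1) / g with hq
    set r := (n + g - 1) % g with hr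
    set m := g * q with hm
    omega
  -- column bound
  have hcol : ∀ n : ℕ, ∀ s : Fin n, mug n g ≤ (s : ℕ) →
      (∑ r : Fin n, ‖padT n g f r s‖ ^ 2) ≤ t ((s : ℕ) - mug n g) := by
    intro n s hs
    set μ := mug n g with hμ
    set j := (s : ℕ) - μ with hj
    have hsj : (s : ℕ) = j + μ := by omega
    have hGdef : g * (s : ℕ) = g * j + g * μ := by rw [hsj, Nat.mul_add]
    set G := g * (s : ℕ) with hG
    have hkey : ∀ r : Fin n, (r : ℕ) + (j + 1) ≤ G := by
      intro r
      have h1 : n ≤ g * μ := hgmug n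
      have h3 : j ≤ g * j := Nat.le_mul_of_pos_left j hgpos
      have h4 : (r : ℕ) < n := r.isLt
      set b := g * j with hb
      set d := g * μ with hd
      omega
    set k : Fin n → ℕ := fun r => G - (r : ℕ) - (j + 1) with hk
    have hentry : ∀ r : Fin n, ‖padT n g f r s‖ ^ 2 = c (k r + (j + 1)) := by
      intro r
      have h5 := hkey r
      have h6 : k r + (j + 1) = G - (r : ℕ) := by
        simp only [hk]
        omega
      rw [h6]
      have h7 : (-((G - (r : ℕ) : ℕ) : ℤ)) = (r : ℤ) - (g : ℤ) * ((s : ℕ) : ℤ) := by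
        rw [Nat.cast_sub (by omega : (r : ℕ) ≤ G)]
        rw [hG]
        push_cast
        ring
      show ‖padT n g f r s‖ ^ 2 = ‖fhat f (-((G - (r : ℕ) : ℕ) : ℤ))‖ ^ 2
      rw [h7]
      have h8 : ¬ ((s : ℕ) < μ) := not_lt.mpr hs
      simp [padT, gToeplitz, Matrix.of_apply, h8, hμ, show ¬ ((s : ℕ) < mug n g) from h8]
    have hinj : ∀ a ∈ Finset.univ, ∀ b ∈ Finset.univ, k a = k b → a = b := by
      intro a _ b _ hab
      have ha := hkey a
      have hb := hkey b
      have hab' : G - (a : ℕ) - (j + 1) = G - (b : ℕ) - (j + 1) := hab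
      exact Fin.ext (by omega)
    calc (∑ r : Fin n, ‖padT n g f r s‖ ^ 2)
        = ∑ r : Fin n, c (k r + (j + 1)) := Finset.sum_congr rfl fun r _ => hentry r
      _ = ∑ m ∈ Finset.univ.image k, c (m + (j + 1)) := by
          rw [Finset.sum_image hinj]
      _ ≤ ∑' m, c (m + (j + 1)) :=
          Summable.sum_le_tsum _ (fun m _ => hc0 _) (htsum j)
      _ = t j := rfl
  -- Frobenius bound
  have hfrob : ∀ n : ℕ, (∑ r : Fin n, ∑ s : Fin n, ‖padT n g f r s‖ ^ 2) ≤ S n := by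
    intro n
    rw [Finset.sum_comm]
    have hle1 : ∀ s : Fin n, (∑ r : Fin n, ‖padT n g f r s‖ ^ 2) ≤
        (if mug n g ≤ (s : ℕ) then t ((s : ℕ) - mug n g) else 0) := by
      intro s
      by_cases hs : mug n g ≤ (s : ℕ)
      · rw [if_pos hs]; exact hcol n s hs
      · rw [if_neg hs]
        have hz : ∀ r : Fin n, ‖padT n g f r s‖ ^ 2 = 0 := by
          intro r
          simp [padT, Matrix.of_apply, if_pos (not_le.mp hs)]
        exact le_of_eq (Finset.sum_eq_zero fun r _ => hz r)
    have himg : (Finset.univ.filter (fun s : Fin n => mug n g ≤ (s : ℕ))).image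
        (fun s : Fin n => (s : ℕ) - mug n g) ⊆ Finset.range n := by
      intro m hm
      simp only [Finset.mem_image, Finset.mem_filter] at hm
      obtain ⟨s, ⟨_, hs2⟩, rfl⟩ := hm
      exact Finset.mem_range.mpr (by have := s.isLt; omega)
    calc (∑ s : Fin n, ∑ r : Fin n, ‖padT n g f r s‖ ^ 2)
        ≤ ∑ s : Fin n, (if mug n g ≤ (s : ℕ) then t ((s : ℕ) - mug n g) else 0) :=
          Finset.sum_le_sum fun s _ => hle1 s
      _ = ∑ s ∈ Finset.univ.filter (fun s : Fin n => mug n g ≤ (s : ℕ)),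
            t ((s : ℕ) - mug n g) := (Finset.sum_filter _ _).symm
      _ = ∑ m ∈ (Finset.univ.filter (fun s : Fin n => mug n g ≤ (s : ℕ))).image
            (fun s : Fin n => (s : ℕ) - mug n g), t m := by
          refine (Finset.sum_image ?_).symm
          intro a ha b hb hab
          simp only [Finset.mem_coe, Finset.mem_filter] at ha hb
          have ha2 := ha.2
          have hb2 := hb.2
          have hab' : (a : ℕ) - mug n g = (b : ℕ) - mug n g := hab
          exact Fin.ext (by omega)
      _ ≤ S n := Finset.sum_le_sum_of_subset_of_nonneg himg (fun m _ _ => ht0 m)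
  -- conclusion
  rw [Asymptotics.isLittleO_iff]
  intro eps heps
  have heps2 : (0 : ℝ) < eps ^ 2 := by positivity
  have hev : ∀ᶠ n : ℕ in atTop, S n / n < eps ^ 2 := hces.eventually (gt_mem_nhds heps2)
  filter_upwards [hev, eventually_ge_atTop 1] with n hn hn1
  have hn0 : (0 : ℝ) < n := by exact_mod_cast hn1
  have htn0 : 0 ≤ traceNorm (padT n g f) :=
    Finset.sum_nonneg fun i _ => Real.sqrt_nonneg _
  rw [Real.norm_of_nonneg htn0, Real.norm_of_nonneg hn0.le]
  have hSn : S n ≤ eps ^ 2 * n := by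
    rw [div_lt_iff₀ hn0] at hn
    linarith
  calc traceNorm (padT n g f)
      ≤ Real.sqrt ((n : ℝ) * ∑ r, ∑ s, ‖padT n g f r s‖ ^ 2) := aux_traceNorm_le _
    _ ≤ Real.sqrt ((eps * n) ^ 2) := by
        apply Real.sqrt_le_sqrt
        have h1 : (n : ℝ) * (∑ r, ∑ s, ‖padT n g f r s‖ ^ 2) ≤ (n : ℝ) * S n :=
          mul_le_mul_of_nonneg_left (hfrob n) hn0.le
        have h2 : (n : ℝ) * S n ≤ (n : ℝ) * (eps ^ 2 * n) :=
          mul_le_mul_of_nonneg_left hSn hn0.le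
        nlinarith
    _ = eps * n := Real.sqrt_sq (mul_nonneg heps.le hn0.le)
end
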